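/- Let n ≥ 1, let A be an n×n real matrix and let b ∈ ℝⁿ. Let X* ∈ ℝⁿ be the vector with components X*_j = per(A_[j]) − per(A), where A_[j] is the matrix formed by replacing the j-th column of A by the column vector b. Then X* is the maximal solution of the system A ⊙ X = b (i.e., A ⊙ X* = b and every solution Y ∈ ℝⁿ satisfies Y ≤ X* entrywise) if and only if (A ⊙ A⁻)_{ij} ≤ b_i − b_j for all i, j ∈ {1,…,n}. -/

import Mathlib

open Matrix

/-- Tropical (max-plus) permanent of a square real matrix:
`per(A) = max over permutations σ of ∑ i, A i (σ i)`. -/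
noncomputable def tperm {p : ℕ} (A : Matrix (Fin p) (Fin p) ℝ) : ℝ :=
  Finset.univ.sup' ⟨1, Finset.mem_univ 1⟩
    (fun σ : Equiv.Perm (Fin p) => ∑ i, A i (σ i))

/-- `del A i j` is the matrix obtained from `A` by deleting row `i` and column `j`. -/
def del {p : ℕ} (A : Matrix (Fin (p+1)) (Fin (p+1)) ℝ) (i j : Fin (p+1)) :
    Matrix (Fin p) (Fin p) ℝ :=
  A.submatrix i.succAbove j.succAbove

/-- Tropical (max-plus) matrix product: `(P ⊙ Q) i j = max_k (P i k + Q k j)`. -/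
noncomputable def tmul {l m n : ℕ} (P : Matrix (Fin l) (Fin (m+1)) ℝ)
    (Q : Matrix (Fin (m+1)) (Fin n) ℝ) : Matrix (Fin l) (Fin n) ℝ :=
  fun i j => Finset.univ.sup' ⟨0, Finset.mem_univ 0⟩ (fun k => P i k + Q k j)

/-- Tropical (max-plus) matrix-vector product: `(P ⊙ x) i = max_k (P i k + x k)`. -/
noncomputable def tmulVec {l m : ℕ} (P : Matrix (Fin l) (Fin (m+1)) ℝ)
    (x : Fin (m+1) → ℝ) : Fin l → ℝ :=
  fun i => Finset.univ.sup' ⟨0, Finset.mem_univ 0⟩ (fun k => P i k + x k)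

/-- The ε-adjoint: `adj(A)_{ij} = per(A(j|i))`. -/
noncomputable def tadj {p : ℕ} (A : Matrix (Fin (p+1)) (Fin (p+1)) ℝ) :
    Matrix (Fin (p+1)) (Fin (p+1)) ℝ :=
  fun i j => tperm (del A j i)

/-- The pseudo-inverse: `A⁻_{ij} = per(A(j|i)) - per(A)`. -/
noncomputable def pinv {p : ℕ} (A : Matrix (Fin (p+1)) (Fin (p+1)) ℝ) :
    Matrix (Fin (p+1)) (Fin (p+1)) ℝ :=
  fun i j => tperm (del A j i) - tperm A

namespace Stmt8Aux

variable {n : ℕ}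

lemma tperm_attain {p : ℕ} (M : Matrix (Fin p) (Fin p) ℝ) :
    ∃ σ : Equiv.Perm (Fin p), tperm M = ∑ i, M i (σ i) := by
  obtain ⟨σ, -, h⟩ := Finset.exists_mem_eq_sup' (⟨1, Finset.mem_univ 1⟩ :
    (Finset.univ : Finset (Equiv.Perm (Fin p))).Nonempty)
    (fun σ : Equiv.Perm (Fin p) => ∑ i, M i (σ i))
  exact ⟨σ, h⟩

lemma le_tperm {p : ℕ} (M : Matrix (Fin p) (Fin p) ℝ) (σ : Equiv.Perm (Fin p)) :
    ∑ i, M i (σ i) ≤ tperm M :=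
  Finset.le_sup' (fun σ : Equiv.Perm (Fin p) => ∑ i, M i (σ i)) (Finset.mem_univ σ)

lemma tperm_le {p : ℕ} (M : Matrix (Fin p) (Fin p) ℝ) {x : ℝ}
    (h : ∀ σ : Equiv.Perm (Fin p), ∑ i, M i (σ i) ≤ x) : tperm M ≤ x :=
  Finset.sup'_le _ _ fun σ _ => h σ

/-- Extend a permutation of `Fin n` to a permutation of `Fin (n+1)` sending `k` to `j`. -/
noncomputable def extPerm (k j : Fin (n+1)) (τ : Equiv.Perm (Fin n)) :
    Equiv.Perm (Fin (n+1)) :=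
  (finSuccEquiv' k).trans ((Equiv.optionCongr τ).trans (finSuccEquiv' j).symm)

lemma extPerm_k (k j : Fin (n+1)) (τ : Equiv.Perm (Fin n)) : extPerm k j τ k = j := by
  simp [extPerm, finSuccEquiv'_at, finSuccEquiv'_symm_none]

lemma extPerm_succAbove (k j : Fin (n+1)) (τ : Equiv.Perm (Fin n)) (i : Fin n) :
    extPerm k j τ (k.succAbove i) = j.succAbove (τ i) := by
  simp [extPerm, finSuccEquiv'_succAbove, finSuccEquiv'_symm_some]

lemma exists_decomp (k j : Fin (n+1)) (σ : Equiv.Perm (Fin (n+1))) (h : σ k = j) :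
    ∃ τ : Equiv.Perm (Fin n), ∀ i, σ (k.succAbove i) = j.succAbove (τ i) := by
  set e : Option (Fin n) ≃ Option (Fin n) :=
    (finSuccEquiv' k).symm.trans (σ.trans (finSuccEquiv' j)) with he
  refine ⟨e.removeNone, fun i => ?_⟩
  have hne : σ (k.succAbove i) ≠ j := by
    rw [← h]
    exact fun hc => Fin.succAbove_ne k i (σ.injective hc)
  obtain ⟨m, hm⟩ := Fin.exists_succAbove_eq hne
  -- hm : j.succAbove m = σ (k.succAbove i)
  have hsome : e (some i) = some m := by
    simp only [he, Equiv.trans_apply, finSuccEquiv'_symm_some, ← hm,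
      finSuccEquiv'_succAbove]
  have h1 := Equiv.removeNone_some e (x := i) ⟨m, hsome⟩
  rw [hsome] at h1
  have h2 : e.removeNone i = m := Option.some_injective _ h1
  rw [h2, hm]

lemma sum_le_cof (M : Matrix (Fin (n+1)) (Fin (n+1)) ℝ) {k j : Fin (n+1)}
    (σ : Equiv.Perm (Fin (n+1))) (h : σ k = j) :
    ∑ i, M i (σ i) ≤ M k j + tperm (del M k j) := by
  obtain ⟨τ, hτ⟩ := exists_decomp k j σ h
  rw [Fin.sum_univ_succAbove (fun i => M i (σ i)) k, h]
  refine add_le_add le_rfl ?_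
  calc ∑ i, M (k.succAbove i) (σ (k.succAbove i))
      = ∑ i, del M k j i (τ i) := by
        refine Finset.sum_congr rfl fun i _ => ?_
        rw [hτ i]; rfl
    _ ≤ tperm (del M k j) := le_tperm _ τ

lemma cof_le (M : Matrix (Fin (n+1)) (Fin (n+1)) ℝ) (k j : Fin (n+1)) :
    M k j + tperm (del M k j) ≤ tperm M := by
  obtain ⟨τ, hτ⟩ := tperm_attain (del M k j)
  rw [hτ]
  have h : M k j + ∑ i, del M k j i (τ i) = ∑ i, M i (extPerm k j τ i) := by
    rw [Fin.sum_univ_succAbove (fun i => M i (extPerm k j τ i)) k, extPerm_k]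
    congr 1
    refine Finset.sum_congr rfl fun i _ => ?_
    rw [extPerm_succAbove]; rfl
  rw [h]
  exact le_tperm _ _

lemma tperm_row_attain (M : Matrix (Fin (n+1)) (Fin (n+1)) ℝ) (k : Fin (n+1)) :
    ∃ j, tperm M = M k j + tperm (del M k j) := by
  obtain ⟨σ, hσ⟩ := tperm_attain M
  refine ⟨σ k, le_antisymm ?_ (cof_le M k (σ k))⟩
  rw [hσ]
  exact sum_le_cof M σ rfl

lemma tperm_col_attain (M : Matrix (Fin (n+1)) (Fin (n+1)) ℝ) (j : Fin (n+1)) :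
    ∃ k, tperm M = M k j + tperm (del M k j) := by
  obtain ⟨σ, hσ⟩ := tperm_attain M
  refine ⟨σ.symm j, le_antisymm ?_ (cof_le M (σ.symm j) j)⟩
  rw [hσ]
  exact sum_le_cof M σ (σ.apply_symm_apply j)

lemma del_updateColumn (A : Matrix (Fin (n+1)) (Fin (n+1)) ℝ) (b : Fin (n+1) → ℝ)
    (k j : Fin (n+1)) : del (A.updateCol j b) k j = del A k j := by
  funext i m
  simp [del, Matrix.updateCol_apply, Fin.succAbove_ne]

lemma cramer_lower (A : Matrix (Fin (n+1)) (Fin (n+1)) ℝ) (b : Fin (n+1) → ℝ)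
    (k j : Fin (n+1)) :
    b k + tperm (del A k j) ≤ tperm (A.updateCol j b) := by
  have h := cof_le (A.updateCol j b) k j
  rwa [del_updateColumn, Matrix.updateCol_apply, if_pos rfl] at h

lemma cramer_attain (A : Matrix (Fin (n+1)) (Fin (n+1)) ℝ) (b : Fin (n+1) → ℝ)
    (j : Fin (n+1)) :
    ∃ k, tperm (A.updateCol j b) = b k + tperm (del A k j) := by
  obtain ⟨k, hk⟩ := tperm_col_attain (A.updateCol j b) j
  rw [del_updateColumn, Matrix.updateCol_apply, if_pos rfl] at hk
  exact ⟨k, hk⟩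

end Stmt8Aux

open Stmt8Aux

/-- extended Cramer's rule: Let `X*_j = per(A_[j]) - per(A)`, where `A_[j]` is
`A` with its `j`-th column replaced by `b`. Then `X*` is the maximal solution of `A ⊙ X = b`
(i.e. `A ⊙ X* = b` and every solution `Y` satisfies `Y ≤ X*`) if and only if
`(A ⊙ A⁻)_{ij} ≤ b_i - b_j` for all `i, j`. -/
theorem stmt8 {n : ℕ} (A : Matrix (Fin (n+1)) (Fin (n+1)) ℝ) (b : Fin (n+1) → ℝ) :
    ((∀ i, tmulVec A (fun j => tperm (A.updateCol j b) - tperm A) i = b i) ∧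
      (∀ Y : Fin (n+1) → ℝ, (∀ i, tmulVec A Y i = b i) →
        ∀ j, Y j ≤ tperm (A.updateCol j b) - tperm A)) ↔
    (∀ i j, tmul A (pinv A) i j ≤ b i - b j) := by
  have hmax : ∀ Y : Fin (n+1) → ℝ, (∀ i, tmulVec A Y i = b i) →
      ∀ j, Y j ≤ tperm (A.updateCol j b) - tperm A := by
    intro Y hY j
    obtain ⟨k, hk⟩ := tperm_col_attain A j
    have h1 : A k j + Y j ≤ b k := by
      rw [← hY k]
      exact Finset.le_sup' (fun m => A k m + Y m) (Finset.mem_univ j)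
    have h2 : b k + tperm (del A k j) ≤ tperm (A.updateCol j b) :=
      cramer_lower A b k j
    linarith
  constructor
  · rintro ⟨h1, -⟩ i j
    show Finset.univ.sup' ⟨0, Finset.mem_univ 0⟩ (fun k => A i k + pinv A k j) ≤ b i - b j
    refine Finset.sup'_le _ _ fun k _ => ?_
    have hx : A i k + (tperm (A.updateCol k b) - tperm A) ≤ b i := by
      rw [← h1 i]
      exact Finset.le_sup'
        (fun m => A i m + (tperm (A.updateCol m b) - tperm A)) (Finset.mem_univ k)
    have h2 : b j + tperm (del A j k) ≤ tperm (A.updateCol k b) :=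
      cramer_lower A b j k
    show A i k + (tperm (del A j k) - tperm A) ≤ b i - b j
    linarith
  · intro hR
    refine ⟨fun i => ?_, hmax⟩
    show Finset.univ.sup' ⟨0, Finset.mem_univ 0⟩
      (fun k => A i k + (tperm (A.updateCol k b) - tperm A)) = b i
    apply le_antisymm
    · refine Finset.sup'_le _ _ fun j _ => ?_
      obtain ⟨k, hk⟩ := cramer_attain A b j
      have h2 : A i j + (tperm (del A k j) - tperm A) ≤ b i - b k := by
        refine le_trans ?_ (hR i k)
        exact Finset.le_sup' (fun m => A i m + pinv A m k) (Finset.mem_univ j)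
      show A i j + (tperm (A.updateCol j b) - tperm A) ≤ b i
      linarith
    · obtain ⟨j, hj⟩ := tperm_row_attain A i
      have h2 : b i + tperm (del A i j) ≤ tperm (A.updateCol j b) :=
        cramer_lower A b i j
      refine le_trans ?_ (Finset.le_sup'
        (fun m => A i m + (tperm (A.updateCol m b) - tperm A)) (Finset.mem_univ j))
      show b i ≤ A i j + (tperm (A.updateCol j b) - tperm A)
      linarith
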